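/- Risk reduction by perturbation (case 2 of the proof of Theorem 1): Let D be a distribution over Y, let α ∈ [0,1], let p be a strictly positive distribution over Y, and let t ≠ y* be labels with p t = p y* and p y < p t for all y ∉ {t, y*}. If D y* > D t and D y* − D t + (1−α)·(2·D y* − 1) > 0, then there exists ε with 0 < ε < p t and p y < p t − ε for all y ∉ {t, y*} such that the perturbed distribution q (defined by q y* = p y* + ε, q t = p t − ε, q y = p y otherwise) satisfies L_α(q,D) < L_α(p,D). -/

import Mathlib

open Real

/-- The maximum of `p` over all labels different from `y`
(as a supremum, which for a finite nonempty label set equals the maximum). -/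
noncomputable def maxNe {Y : Type*} (p : Y → ℝ) (y : Y) : ℝ :=
  sSup {x : ℝ | ∃ y' : Y, y' ≠ y ∧ p y' = x}

/-- The multiclass hinge loss of a (strictly positive) distribution `p` at label `y`. -/
noncomputable def hingeLoss {Y : Type*} (p : Y → ℝ) (y : Y) : ℝ :=
  max 0 (1 - Real.log (p y / maxNe p y))

/-- The log loss of a (strictly positive) distribution `p` at label `y`. -/
noncomputable def logLoss {Y : Type*} (p : Y → ℝ) (y : Y) : ℝ :=
  - Real.log (p y)

/-- The hybrid loss with mixture parameter `α`. -/
noncomputable def hybridLoss {Y : Type*} (α : ℝ) (p : Y → ℝ) (y : Y) : ℝ :=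
  α * logLoss p y + (1 - α) * hingeLoss p y

/-- The conditional risk `L_α(p, D) = ∑ y, D y * ℓ_α(p, y)`. -/
noncomputable def condRisk {Y : Type*} [Fintype Y] (α : ℝ) (p D : Y → ℝ) : ℝ :=
  ∑ y, D y * hybridLoss α p y

/-- `D` is a distribution over `Y`. -/
def IsDist {Y : Type*} [Fintype Y] (D : Y → ℝ) : Prop :=
  (∀ y, 0 ≤ D y) ∧ ∑ y, D y = 1

/-- `p` is a strictly positive distribution over `Y`. -/
def IsPosDist {Y : Type*} [Fintype Y] (p : Y → ℝ) : Prop :=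
  (∀ y, 0 < p y) ∧ ∑ y, p y = 1

lemma maxNe_eq {Y : Type*} (p : Y → ℝ) (y y₀ : Y) (h0 : y₀ ≠ y)
    (hub : ∀ y', y' ≠ y → p y' ≤ p y₀) : maxNe p y = p y₀ :=
  IsGreatest.csSup_eq ⟨⟨y₀, h0, rfl⟩, by rintro x ⟨y', hy', rfl⟩; exact hub y' hy'⟩

/-- Risk reduction by perturbation (case 2 of the proof of Theorem 1). -/
theorem risk_reduction_by_perturbation {Y : Type*} [Fintype Y] [DecidableEq Y]
    (hcard : 1 < Fintype.card Y)
    (D : Y → ℝ) (hD : IsDist D)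
    (α : ℝ) (hα : α ∈ Set.Icc (0 : ℝ) 1)
    (p : Y → ℝ) (hp : IsPosDist p)
    (t ystar : Y) (hne : t ≠ ystar) (hpt : p t = p ystar)
    (hlt : ∀ y, y ≠ t → y ≠ ystar → p y < p t)
    (hDgt : D t < D ystar)
    (hcond : 0 < D ystar - D t + (1 - α) * (2 * D ystar - 1)) :
    ∃ ε : ℝ, 0 < ε ∧ ε < p t ∧ (∀ y, y ≠ t → y ≠ ystar → p y < p t - ε) ∧
      condRisk α (fun y => if y = ystar then p ystar + ε
        else if y = t then p t - ε else p y) D < condRisk α p D := by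
  obtain ⟨hα0, hα1⟩ := hα
  obtain ⟨hDnn, hDsum⟩ := hD
  obtain ⟨hppos, hpsum⟩ := hp
  have hpt0 : 0 < p t := hppos t
  have hys : p ystar = p t := hpt.symm
  haveI : Nonempty Y := Fintype.card_pos_iff.mp (by omega)
  -- the margin δ
  obtain ⟨δ, hδpos, hδle⟩ :
      ∃ δ : ℝ, 0 < δ ∧ ∀ y, y ≠ t → y ≠ ystar → δ ≤ p t - p y := by
    refine ⟨Finset.univ.inf' Finset.univ_nonempty
      (fun y => if y = t ∨ y = ystar then p t else p t - p y), ?_, ?_⟩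
    · rw [Finset.lt_inf'_iff]
      intro y _
      split_ifs with h
      · exact hpt0
      · push_neg at h
        have := hlt y h.1 h.2
        linarith
    · intro y h1 h2
      have h3 := Finset.inf'_le (fun y => if y = t ∨ y = ystar then p t else p t - p y)
        (Finset.mem_univ y)
      rwa [if_neg (by tauto)] at h3
  set S : ℝ := D ystar - D t + (1 - α) * (2 * D ystar - 1) with hSdef
  clear_value S
  obtain ⟨ε, hε0, hε3, hεS, hεδ⟩ :
      ∃ ε : ℝ, 0 < ε ∧ ε ≤ p t / 3 ∧ ε ≤ p t * S / 3 ∧ ε < δ := by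
    refine ⟨min (min (p t / 3) (p t * S / 3)) (δ / 2), ?_, ?_, ?_, ?_⟩
    · exact lt_min (lt_min (by linarith) (div_pos (mul_pos hpt0 hcond) (by norm_num)))
        (by linarith)
    · exact le_trans (min_le_left _ _) (min_le_left _ _)
    · exact le_trans (min_le_left _ _) (min_le_right _ _)
    · exact lt_of_le_of_lt (min_le_right _ _) (by linarith)
  have hεpt : ε < p t := by linarith
  have hlt' : ∀ y, y ≠ t → y ≠ ystar → p y < p t - ε := by
    intro y h1 h2; have := hδle y h1 h2; linarith
  refine ⟨ε, hε0, hεpt, hlt', ?_⟩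
  set q : Y → ℝ := fun y => if y = ystar then p ystar + ε else if y = t then p t - ε else p y
    with hqdef
  have hq_ys : q ystar = p t + ε := by simp [hqdef, hys]
  have hq_t : q t = p t - ε := by simp [hqdef, hne]
  have hq_o : ∀ y, y ≠ t → y ≠ ystar → q y = p y := by
    intro y h1 h2; simp [hqdef, h1, h2]
  have pε1 : 0 < p t + ε := by linarith
  have pε2 : 0 < p t - ε := by linarith
  -- maxNe computations for p
  have hm_pt : maxNe p t = p t := by
    rw [maxNe_eq p t ystar hne.symm, hys]
    intro y' h
    by_cases h2 : y' = ystar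
    · subst h2; exact le_rfl
    · exact le_of_lt (hpt ▸ hlt y' h h2)
  have hm_pys : maxNe p ystar = p t := by
    apply maxNe_eq p ystar t hne
    intro y' h
    by_cases h2 : y' = t
    · subst h2; exact le_rfl
    · exact (hlt y' h2 h).le
  have hm_po : ∀ y, y ≠ t → y ≠ ystar → maxNe p y = p t := by
    intro y h1 h2
    apply maxNe_eq p y t (Ne.symm h1)
    intro y' h
    by_cases ht : y' = t
    · subst ht; exact le_rfl
    by_cases hy : y' = ystar
    · subst hy; exact hys.le
    · exact (hlt y' ht hy).le
  -- maxNe computations for q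
  have hm_qys : maxNe q ystar = p t - ε := by
    rw [← hq_t]
    apply maxNe_eq q ystar t hne
    intro y' h
    by_cases ht : y' = t
    · subst ht; exact le_rfl
    · rw [hq_o y' ht h, hq_t]; exact (hlt' y' ht h).le
  have hm_qt : maxNe q t = p t + ε := by
    rw [← hq_ys]
    apply maxNe_eq q t ystar hne.symm
    intro y' h
    by_cases hy : y' = ystar
    · subst hy; exact le_rfl
    · rw [hq_o y' h hy, hq_ys]; linarith [hlt' y' h hy]
  have hm_qo : ∀ y, y ≠ t → y ≠ ystar → maxNe q y = p t + ε := by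
    intro y h1 h2
    rw [← hq_ys]
    apply maxNe_eq q y ystar (Ne.symm h2)
    intro y' h
    by_cases hy : y' = ystar
    · subst hy; exact le_rfl
    by_cases ht : y' = t
    · subst ht; rw [hq_t, hq_ys]; linarith
    · rw [hq_o y' ht hy, hq_ys]; linarith [hlt y' ht hy]
  -- log inequality facts
  have hlog_mono : Real.log (p t - ε) ≤ Real.log (p t + ε) :=
    Real.log_le_log pε2 (by linarith)
  have hlog_le1 : Real.log (p t + ε) - Real.log (p t - ε) ≤ 1 := by
    have h2 : p t + ε ≤ 2 * (p t - ε) := by linarith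
    have h3 := Real.log_le_log pε1 h2
    rw [Real.log_mul two_ne_zero (ne_of_gt pε2)] at h3
    have hlog2 : Real.log 2 ≤ 1 := by
      have := Real.log_le_sub_one_of_pos (by norm_num : (0:ℝ) < 2); linarith
    linarith
  -- hinge losses for p
  have hh_pt : hingeLoss p t = 1 := by
    rw [hingeLoss, hm_pt, div_self (ne_of_gt hpt0), Real.log_one]
    norm_num
  have hh_pys : hingeLoss p ystar = 1 := by
    rw [hingeLoss, hm_pys, hys, div_self (ne_of_gt hpt0), Real.log_one]
    norm_num
  have hh_po : ∀ y, y ≠ t → y ≠ ystar →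
      hingeLoss p y = 1 - Real.log (p y) + Real.log (p t) := by
    intro y h1 h2
    have h3 : Real.log (p y) ≤ Real.log (p t) := Real.log_le_log (hppos y) (hlt y h1 h2).le
    rw [hingeLoss, hm_po y h1 h2, Real.log_div (ne_of_gt (hppos y)) (ne_of_gt hpt0),
      max_eq_right (by linarith)]
    ring
  -- hinge losses for q
  have hh_qys : hingeLoss q ystar = 1 - (Real.log (p t + ε) - Real.log (p t - ε)) := by
    rw [hingeLoss, hm_qys, hq_ys, Real.log_div (ne_of_gt pε1) (ne_of_gt pε2),
      max_eq_right (by linarith)]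
  have hh_qt : hingeLoss q t = 1 + (Real.log (p t + ε) - Real.log (p t - ε)) := by
    rw [hingeLoss, hm_qt, hq_t, Real.log_div (ne_of_gt pε2) (ne_of_gt pε1),
      max_eq_right (by linarith)]
    ring
  have hh_qo : ∀ y, y ≠ t → y ≠ ystar →
      hingeLoss q y = 1 - Real.log (p y) + Real.log (p t + ε) := by
    intro y h1 h2
    have h3 : Real.log (p y) ≤ Real.log (p t + ε) :=
      Real.log_le_log (hppos y) (by linarith [hlt' y h1 h2])
    rw [hingeLoss, hq_o y h1 h2, hm_qo y h1 h2,
      Real.log_div (ne_of_gt (hppos y)) (ne_of_gt pε1), max_eq_right (by linarith)]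
    ring
  -- per-label risk differences
  set f : Y → ℝ := fun y => D y * hybridLoss α q y - D y * hybridLoss α p y with hfdef
  set s : Finset Y := (Finset.univ.erase ystar).erase t with hsdef
  have hmem_s : ∀ y, y ∈ s → y ≠ t ∧ y ≠ ystar := by
    intro y hy
    rw [hsdef, Finset.mem_erase, Finset.mem_erase] at hy
    exact ⟨hy.1, hy.2.1⟩
  have hsplit : ∀ (F : Y → ℝ), ∑ y, F y = F ystar + (F t + ∑ y ∈ s, F y) := by
    intro F
    rw [← Finset.add_sum_erase _ F (Finset.mem_univ ystar),
      ← Finset.add_sum_erase _ F (Finset.mem_erase.mpr ⟨hne, Finset.mem_univ t⟩)]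
  have hDs : ∑ y ∈ s, D y = 1 - D ystar - D t := by
    have := hsplit D
    rw [hDsum] at this
    linarith
  have hf_ys : f ystar = D ystar * (-(α * (Real.log (p t + ε) - Real.log (p t)))
      - (1 - α) * (Real.log (p t + ε) - Real.log (p t - ε))) := by
    simp only [hfdef, hybridLoss, logLoss, hh_qys, hh_pys, hq_ys, hys]
    ring
  have hf_t : f t = D t * (α * (Real.log (p t) - Real.log (p t - ε))
      + (1 - α) * (Real.log (p t + ε) - Real.log (p t - ε))) := by
    simp only [hfdef, hybridLoss, logLoss, hh_qt, hh_pt, hq_t]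
    ring
  have hsum_s : ∑ y ∈ s, f y
      = (∑ y ∈ s, D y) * ((1 - α) * (Real.log (p t + ε) - Real.log (p t))) := by
    rw [Finset.sum_mul]
    apply Finset.sum_congr rfl
    intro y hy
    obtain ⟨h1, h2⟩ := hmem_s y hy
    simp only [hfdef, hybridLoss, logLoss, hh_qo y h1 h2, hh_po y h1 h2, hq_o y h1 h2]
    ring
  have hdiff : condRisk α q D - condRisk α p D = ∑ y, f y := by
    rw [condRisk, condRisk, ← Finset.sum_sub_distrib]
  clear_value f q
  -- analytic bounds
  have hAlb : ε / (p t + ε) ≤ Real.log (p t + ε) - Real.log (p t) := by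
    have h := Real.log_le_sub_one_of_pos (show 0 < p t / (p t + ε) by positivity)
    rw [Real.log_div (ne_of_gt hpt0) (ne_of_gt pε1)] at h
    have h2 : p t / (p t + ε) = 1 - ε / (p t + ε) := by field_simp; ring
    rw [h2] at h
    linarith
  have hBA0 : Real.log (p t + ε) + Real.log (p t - ε) ≤ 2 * Real.log (p t) := by
    have hmul : (p t - ε) * (p t + ε) ≤ p t * p t := by
      have he : p t * p t - (p t - ε) * (p t + ε) = ε ^ 2 := by ring
      have := sq_nonneg ε
      linarith
    have h := Real.log_le_log (mul_pos pε2 pε1) hmul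
    rw [Real.log_mul (ne_of_gt pε2) (ne_of_gt pε1),
      Real.log_mul (ne_of_gt hpt0) (ne_of_gt hpt0)] at h
    linarith
  have hBAub : 2 * Real.log (p t) - Real.log (p t + ε) - Real.log (p t - ε)
      ≤ ε ^ 2 / ((p t - ε) * (p t + ε)) := by
    have h := Real.log_le_sub_one_of_pos
      (show 0 < p t * p t / ((p t - ε) * (p t + ε)) by positivity)
    rw [Real.log_div (by positivity) (by positivity),
      Real.log_mul (ne_of_gt hpt0) (ne_of_gt hpt0),
      Real.log_mul (ne_of_gt pε2) (ne_of_gt pε1)] at h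
    have h2 : p t * p t / ((p t - ε) * (p t + ε)) - 1 = ε ^ 2 / ((p t - ε) * (p t + ε)) := by
      field_simp
      ring
    rw [h2] at h
    linarith
  -- distribution bounds
  have hDt1 : D t ≤ 1 := by
    have := Finset.single_le_sum (f := D) (fun y _ => hDnn y) (Finset.mem_univ t)
    rw [hDsum] at this
    exact this
  have hCB_le : D t - (1 - α) * D ystar ≤ 1 := by
    have := mul_nonneg (by linarith : (0:ℝ) ≤ 1 - α) (hDnn ystar)
    linarith
  -- assemble
  have e1 : condRisk α q D - condRisk α p D
      = (Real.log (p t + ε) - Real.log (p t)) * (-S)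
        + ((Real.log (p t) - Real.log (p t - ε)) - (Real.log (p t + ε) - Real.log (p t)))
          * (D t - (1 - α) * D ystar) := by
    rw [hdiff, hsplit f, hf_ys, hf_t, hsum_s, hDs, hSdef]
    ring
  have t1 : (Real.log (p t + ε) - Real.log (p t)) * (-S) ≤ (ε / (p t + ε)) * (-S) :=
    mul_le_mul_of_nonpos_right hAlb (by linarith)
  have t2 : ((Real.log (p t) - Real.log (p t - ε)) - (Real.log (p t + ε) - Real.log (p t)))
      * (D t - (1 - α) * D ystar) ≤ ε ^ 2 / ((p t - ε) * (p t + ε)) := by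
    have hnn : 0 ≤ (Real.log (p t) - Real.log (p t - ε))
        - (Real.log (p t + ε) - Real.log (p t)) := by linarith
    calc ((Real.log (p t) - Real.log (p t - ε)) - (Real.log (p t + ε) - Real.log (p t)))
        * (D t - (1 - α) * D ystar)
        ≤ ((Real.log (p t) - Real.log (p t - ε)) - (Real.log (p t + ε) - Real.log (p t))) * 1 :=
          mul_le_mul_of_nonneg_left hCB_le hnn
      _ ≤ ε ^ 2 / ((p t - ε) * (p t + ε)) := by rw [mul_one]; linarith
  have hkey2 : ε < S * (p t - ε) := by
    have h1 : S * (2 * p t / 3) ≤ S * (p t - ε) :=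
      mul_le_mul_of_nonneg_left (by linarith) hcond.le
    have h2 : S * (2 * p t / 3) = 2 * (p t * S / 3) := by ring
    linarith
  have hfin : (ε / (p t + ε)) * (-S) + ε ^ 2 / ((p t - ε) * (p t + ε)) < 0 := by
    have heq : (ε / (p t + ε)) * (-S) + ε ^ 2 / ((p t - ε) * (p t + ε))
        = (ε ^ 2 - ε * S * (p t - ε)) / ((p t - ε) * (p t + ε)) := by
      field_simp
      ring
    rw [heq]
    apply div_neg_of_neg_of_pos
    · have h1 := mul_lt_mul_of_pos_left hkey2 hε0
      have e2 : ε * (S * (p t - ε)) = ε * S * (p t - ε) := by ring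
      have e3 : ε * ε = ε ^ 2 := by ring
      linarith
    · exact mul_pos pε2 pε1
  have hfinal : condRisk α q D - condRisk α p D < 0 := by
    rw [e1]
    linarith
  linarith
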